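/- If {|ψ_j>}_{j=1}^M ⊂ C^N ⊗ C^N satisfies (1/M)Σ_j (|ψ_j><ψ_j|)^{⊗t} = ∫ (|ψ><ψ|)^{⊗t} dψ_FS (a projective t-design in dimension N²), then the reduced states ρ_j = Tr_B |ψ_j><ψ_j| satisfy (1/M)Σ_j ρ_j^{⊗t} = ∫ ρ^{⊗t} dρ_HS, i.e., they form a mixed-state t-design in dimension N. -/

import Mathlib

open MeasureTheory

/-- Partial trace over the second factor of the projector onto a bipartite vector
`v ∈ ℂ^N ⊗ ℂ^N`. -/
noncomputable def redA {N : ℕ} (v : Fin N × Fin N → ℂ) : Matrix (Fin N) (Fin N) ℂ :=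
  fun i j => ∑ k : Fin N, v (i, k) * (starRingEnd ℂ) (v (j, k))

/-- If {ψⱼ} is a projective t-design in ℂ^{N²} (with respect to the Fubini–Study measure μ,
a probability measure on unit vectors), then the reduced states ρⱼ = Tr_B|ψⱼ><ψⱼ| form a
mixed-state t-design: their average t-fold tensor power equals ∫ ρ^{⊗t} dρ_HS, the HS measure
being the push-forward of μ under partial trace (so the right-hand side is written as an
integral over μ). -/
theorem stmt15 {N t M : ℕ} (hN : 0 < N) (hM : 0 < M)
    (μ : Measure (Fin N × Fin N → ℂ)) [IsProbabilityMeasure μ]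
    (ψ : Fin M → (Fin N × Fin N → ℂ))
    (hunit : ∀ j, ∑ p : Fin N × Fin N, ‖ψ j p‖ ^ 2 = 1)
    (hμunit : ∀ᵐ v ∂μ, ∑ p : Fin N × Fin N, ‖v p‖ ^ 2 = 1)
    (hint : ∀ x y : Fin t → Fin N × Fin N,
      Integrable (fun v => ∏ k, (v (x k) * (starRingEnd ℂ) (v (y k)))) μ)
    (hdesign : ∀ x y : Fin t → Fin N × Fin N,
      (M : ℂ)⁻¹ * ∑ j, ∏ k, (ψ j (x k) * (starRingEnd ℂ) (ψ j (y k))) =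
        ∫ v, ∏ k, (v (x k) * (starRingEnd ℂ) (v (y k))) ∂μ) :
    ∀ x y : Fin t → Fin N,
      (M : ℂ)⁻¹ * ∑ j, ∏ k, redA (ψ j) (x k) (y k) =
        ∫ v, ∏ k, redA v (x k) (y k) ∂μ := by
  intro x y
  have hexp : ∀ v : Fin N × Fin N → ℂ,
      (∏ k, redA v (x k) (y k)) =
        ∑ f ∈ Fintype.piFinset (fun _ : Fin t => (Finset.univ : Finset (Fin N))),
          ∏ k, (v (x k, f k) * (starRingEnd ℂ) (v (y k, f k))) := by
    intro v
    simp only [redA]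
    rw [Finset.prod_univ_sum]
  calc (M : ℂ)⁻¹ * ∑ j, ∏ k, redA (ψ j) (x k) (y k)
      = ∑ f ∈ Fintype.piFinset (fun _ : Fin t => (Finset.univ : Finset (Fin N))),
          ((M : ℂ)⁻¹ * ∑ j, ∏ k,
            (ψ j (x (k : Fin t), f k) * (starRingEnd ℂ) (ψ j (y k, f k)))) := by
        simp only [hexp]
        rw [Finset.sum_comm, Finset.mul_sum]
    _ = ∑ f ∈ Fintype.piFinset (fun _ : Fin t => (Finset.univ : Finset (Fin N))),
          ∫ v, ∏ k, (v (x k, f k) * (starRingEnd ℂ) (v (y k, f k))) ∂μ := by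
        refine Finset.sum_congr rfl fun f _ => ?_
        exact hdesign (fun k => (x k, f k)) (fun k => (y k, f k))
    _ = ∫ v, ∑ f ∈ Fintype.piFinset (fun _ : Fin t => (Finset.univ : Finset (Fin N))),
          ∏ k, (v (x k, f k) * (starRingEnd ℂ) (v (y k, f k))) ∂μ := by
        rw [integral_finset_sum]
        exact fun f _ => hint (fun k => (x k, f k)) (fun k => (y k, f k))
    _ = ∫ v, ∏ k, redA v (x k) (y k) ∂μ := by
        simp only [hexp]
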